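/- For every x with 0 ≤ x ≤ L, c̄(x,0) = c_I; that is, the analytical solid-phase concentration satisfies the constant initial condition c̄(x,0) = c_I on [0,L]. -/

import Mathlib

open Real

lemma bern2_eval (y : ℝ) :
    (Polynomial.map (algebraMap ℚ ℝ) (Polynomial.bernoulli 2)).eval y = y ^ 2 - y + 1/6 := by
  have h2 : bernoulli 2 = 1/6 := by
    rw [bernoulli, bernoulli'_two]; norm_num
  simp [Polynomial.bernoulli, Finset.sum_range_succ, bernoulli_one, bernoulli_zero, h2,
    Polynomial.eval_monomial]
  ring

theorem stmt_9 (L D β cI : ℝ) (hL : 0 < L) (hD : 0 < D)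
    (cbar : ℝ × ℝ → ℝ)
    (hcbar : ∀ x t : ℝ, cbar (x, t) =
      cI - β * x * (1 - x / (2 * L)) + β * D * t / L +
        2 * β * L * (1 / 6 -
          ∑' n : ℕ, (1 / (((n : ℝ) + 1) ^ 2 * Real.pi ^ 2)) *
            Real.cos (((n : ℝ) + 1) * Real.pi * x / L) *
            Real.exp (-((((n : ℝ) + 1) * Real.pi / L) ^ 2 * D * t))) ) :
    ∀ x : ℝ, 0 ≤ x → x ≤ L → cbar (x, 0) = cI := by
  intro x hx0 hxL
  set y : ℝ := x / (2 * L) with hy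
  have hyI : y ∈ Set.Icc (0:ℝ) 1 := by
    constructor
    · positivity
    · rw [hy, div_le_one (by linarith)]; linarith
  have h := hasSum_one_div_nat_pow_mul_cos (k := 1) one_ne_zero hyI
  norm_num at h
  -- h : HasSum (fun n : ℕ => 1/(n:ℝ)^2 * cos (2*π*n*y)) (...)
  have hS : (Polynomial.map (algebraMap ℚ ℝ) (Polynomial.bernoulli 2)).eval y
      = y ^ 2 - y + 1/6 := bern2_eval y
  have h0 : (1 : ℝ) / ((0:ℕ):ℝ) ^ 2 * Real.cos (2 * π * ((0:ℕ):ℝ) * y) = 0 := by norm_num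
  have h' : HasSum (fun n : ℕ => 1 / ((n:ℝ)+1) ^ 2 * Real.cos (2 * π * ((n:ℝ)+1) * y))
      ((2 * π) ^ 2 / 2 / 2 * ((Polynomial.map (algebraMap ℚ ℝ) (Polynomial.bernoulli 2)).eval y)) := by
    have := (hasSum_nat_add_iff (f := fun n : ℕ => 1 / ((n:ℝ)) ^ 2 * Real.cos (2 * π * (n:ℝ) * y)) 1).mpr
      (by simpa using h)
    simpa [Nat.cast_add] using this
  have htsum : (∑' n : ℕ, (1 / (((n : ℝ) + 1) ^ 2 * Real.pi ^ 2)) *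
      Real.cos (((n : ℝ) + 1) * Real.pi * x / L) *
      Real.exp (-((((n : ℝ) + 1) * Real.pi / L) ^ 2 * D * (0:ℝ))))
      = y ^ 2 - y + 1/6 := by
    have hxy : ∀ n : ℕ, ((n:ℝ)+1) * π * x / L = 2 * π * ((n:ℝ)+1) * y := by
      intro n; field_simp [hy]; rw [hy]; field_simp [hL.ne']
    have heq : ∀ n : ℕ, (1 / (((n : ℝ) + 1) ^ 2 * Real.pi ^ 2)) *
        Real.cos (((n : ℝ) + 1) * Real.pi * x / L) *
        Real.exp (-((((n : ℝ) + 1) * Real.pi / L) ^ 2 * D * (0:ℝ)))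
        = (1/π^2) * (1 / ((n:ℝ)+1) ^ 2 * Real.cos (2 * π * ((n:ℝ)+1) * y)) := by
      intro n
      rw [hxy n]
      simp [Real.exp_zero]
      ring
    rw [tsum_congr heq, tsum_mul_left, h'.tsum_eq, hS]
    have hπ := Real.pi_ne_zero
    field_simp
  rw [hcbar, htsum, hy]
  have hL' : (L:ℝ) ≠ 0 := ne_of_gt hL
  field_simp
  ring
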